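/- If the pair (X, X) is pairwise completely positive, then X is completely positive, i.e., X admits a decomposition X = Σ_k u_k u_k* with each u_k an entrywise non-negative real vector. -/

import Mathlib

open Finset

/-- A pair of matrices `(X, Y)` is pairwise completely positive (PCP) if there exist
finite families of vectors `v k, w k : Fin n → ℂ` with
`X = Σ_k (v_k ⊙ w_k)(v_k ⊙ w_k)^*` and `Y = Σ_k (v_k ⊙ conj v_k)(w_k ⊙ conj w_k)^*`. -/
def IsPCP {n : ℕ} (X Y : Matrix (Fin n) (Fin n) ℂ) : Prop :=
  ∃ (m : ℕ) (v w : Fin m → Fin n → ℂ),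
    (∀ i j, X i j = ∑ k, (v k i * w k i) * star (v k j * w k j)) ∧
    (∀ i j, Y i j = ∑ k, (v k i * star (v k i)) * star (w k j * star (w k j)))

noncomputable section


lemma aux_inner {n : ℕ} (x y : EuclideanSpace ℂ (Fin n)) :
    (inner ℂ x y : ℂ) = ∑ i, star (x i) * y i := by
  rw [PiLp.inner_apply]
  simp_rw [RCLike.inner_apply, starRingEnd_apply, mul_comm]

lemma aux_normsq {n : ℕ} (x : EuclideanSpace ℂ (Fin n)) :
    ‖x‖ ^ 2 = ∑ i, Complex.normSq (x i) := by
  rw [EuclideanSpace.norm_eq, Real.sq_sqrt (by positivity)]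
  simp [Complex.sq_norm]

lemma key_cs {n : ℕ} (v w : Fin n → ℂ)
    (heq : Complex.normSq (∑ i, v i * w i)
      = (∑ i, Complex.normSq (v i)) * (∑ i, Complex.normSq (w i))) :
    ∃ u : Fin n → ℝ, (∀ i, 0 ≤ u i) ∧
      ∀ i j, (v i * w i) * star (v j * w j) = (u i : ℂ) * (u j : ℂ) := by
  set x : EuclideanSpace ℂ (Fin n) := WithLp.toLp 2 (fun i => star (v i)) with hx
  set y : EuclideanSpace ℂ (Fin n) := WithLp.toLp 2 (fun i => w i) with hy
  by_cases hx0 : x = 0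
  · refine ⟨fun _ => 0, fun _ => le_rfl, fun i j => ?_⟩
    have : v i = 0 := by
      have := congrArg (fun z : EuclideanSpace ℂ (Fin n) => z i) hx0
      simpa [hx] using congrArg star this
    simp [this]
  by_cases hy0 : y = 0
  · refine ⟨fun _ => 0, fun _ => le_rfl, fun i j => ?_⟩
    have : w i = 0 := by simpa [hy] using congrArg (fun z : EuclideanSpace ℂ (Fin n) => z i) hy0
    simp [this]
  have hxy : (inner ℂ x y : ℂ) = ∑ i, v i * w i := by
    rw [aux_inner]
    simp [hx, hy]
  have hni : ‖(inner ℂ x y : ℂ)‖ ^ 2 = Complex.normSq (∑ i, v i * w i) := by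
    rw [hxy]; simp [Complex.sq_norm]
  have hnx : ‖x‖ ^ 2 = ∑ i, Complex.normSq (v i) := by
    rw [aux_normsq]; simp [hx]
  have hnyy : ‖y‖ ^ 2 = ∑ i, Complex.normSq (w i) := by
    rw [aux_normsq]
  have hsq : ‖(inner ℂ x y : ℂ)‖ ^ 2 = (‖x‖ * ‖y‖) ^ 2 := by
    rw [hni, heq, mul_pow, hnx, hnyy]
  have hnorm : ‖(inner ℂ x y : ℂ)‖ = ‖x‖ * ‖y‖ := by
    have h1 : (0:ℝ) ≤ ‖(inner ℂ x y : ℂ)‖ := norm_nonneg _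
    have h2 : (0:ℝ) ≤ ‖x‖ * ‖y‖ := by positivity
    nlinarith
  obtain ⟨r, -, hr⟩ := (norm_inner_eq_norm_iff hx0 hy0).mp hnorm
  have hw : ∀ i, w i = r * star (v i) := fun i => by simpa [hx, hy] using congrArg (fun z : EuclideanSpace ℂ (Fin n) => z i) hr
  refine ⟨fun i => Real.sqrt (Complex.normSq r) * Complex.normSq (v i),
    fun i => mul_nonneg (Real.sqrt_nonneg _) (Complex.normSq_nonneg _), fun i j => ?_⟩
  have hvr : ∀ i, v i * w i = r * (Complex.normSq (v i) : ℂ) := by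
    intro i
    rw [hw i, show v i * (r * star (v i)) = r * (v i * star (v i)) by ring]
    simp [Complex.star_def, Complex.mul_conj]
  rw [hvr i, hvr j]
  have hstep : (r * (Complex.normSq (v i) : ℂ)) * star (r * (Complex.normSq (v j) : ℂ))
      = ((Complex.normSq r : ℂ)) * (Complex.normSq (v i) : ℂ) * (Complex.normSq (v j) : ℂ) := by
    rw [show (r * (Complex.normSq (v i) : ℂ)) * star (r * (Complex.normSq (v j) : ℂ))
      = (r * star r) * (Complex.normSq (v i) : ℂ) * star ((Complex.normSq (v j) : ℂ)) by rw [star_mul']; ring]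
    simp [Complex.star_def, Complex.mul_conj]
  rw [hstep]
  have hs : Real.sqrt (Complex.normSq r) * Real.sqrt (Complex.normSq r)
      = Complex.normSq r := Real.mul_self_sqrt (Complex.normSq_nonneg r)
  norm_cast
  linear_combination (-(Complex.normSq (v i) * Complex.normSq (v j))) * hs


section Main

open Finset

lemma cs_ineq {n : ℕ} (v w : Fin n → ℂ) :
    Complex.normSq (∑ i, v i * w i)
      ≤ (∑ i, Complex.normSq (v i)) * (∑ i, Complex.normSq (w i)) := by
  set x : EuclideanSpace ℂ (Fin n) := WithLp.toLp 2 (fun i => star (v i)) with hx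
  set y : EuclideanSpace ℂ (Fin n) := WithLp.toLp 2 (fun i => w i) with hy
  have hxy : (inner ℂ x y : ℂ) = ∑ i, v i * w i := by
    rw [aux_inner]; simp [hx, hy]
  have h := norm_inner_le_norm (𝕜 := ℂ) x y
  have hni : ‖(inner ℂ x y : ℂ)‖ ^ 2 = Complex.normSq (∑ i, v i * w i) := by
    rw [hxy]; simp [Complex.sq_norm]
  have hnx : ‖x‖ ^ 2 = ∑ i, Complex.normSq (v i) := by
    rw [aux_normsq]; simp [hx]
  have hnyy : ‖y‖ ^ 2 = ∑ i, Complex.normSq (w i) := by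
    rw [aux_normsq]
  nlinarith [norm_nonneg (inner ℂ x y : ℂ), norm_nonneg x, norm_nonneg y]

lemma double_sum_aux {n : ℕ} (a : Fin n → ℂ) :
    (∑ i, a i) * star (∑ j, a j) = ∑ i, ∑ j, a i * star (a j) := by
  rw [star_sum, Finset.sum_mul_sum]

theorem pcp_self_implies_cp' {n : ℕ} (X : Matrix (Fin n) (Fin n) ℂ)
    (h : ∃ (m : ℕ) (v w : Fin m → Fin n → ℂ),
    (∀ i j, X i j = ∑ k, (v k i * w k i) * star (v k j * w k j)) ∧
    (∀ i j, X i j = ∑ k, (v k i * star (v k i)) * star (w k j * star (w k j)))) :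
    ∃ (m : ℕ) (u : Fin m → Fin n → ℝ), (∀ k i, 0 ≤ u k i) ∧
      ∀ i j, X i j = ∑ k, (u k i : ℂ) * (u k j : ℂ) := by
  obtain ⟨m, v, w, h1, h2⟩ := h
  have hswap : ∀ (t : Fin m → Fin n → Fin n → ℂ),
      ∑ i, ∑ j, ∑ k, t k i j = ∑ k, ∑ i, ∑ j, t k i j := by
    intro t
    rw [show (∑ i, ∑ j, ∑ k, t k i j) = ∑ i, ∑ k, ∑ j, t k i j from
      Finset.sum_congr rfl fun i _ => Finset.sum_comm]
    exact Finset.sum_comm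
  have E1 : ∑ i, ∑ j, X i j
      = ∑ k, (Complex.normSq (∑ i, v k i * w k i) : ℂ) := by
    simp_rw [h1]
    rw [hswap]
    refine Finset.sum_congr rfl fun k _ => ?_
    rw [← double_sum_aux]
    simp only [Complex.star_def, Complex.mul_conj]
  have E2 : ∑ i, ∑ j, X i j
      = ∑ k, (((∑ i, Complex.normSq (v k i)) * (∑ i, Complex.normSq (w k i)) : ℝ) : ℂ) := by
    simp_rw [h2]
    rw [hswap]
    refine Finset.sum_congr rfl fun k _ => ?_
    simp_rw [Complex.star_def, Complex.mul_conj, Complex.conj_ofReal]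
    rw [← Finset.sum_mul_sum]
    push_cast
    ring
  have hR : ∑ k, Complex.normSq (∑ i, v k i * w k i)
      = ∑ k, (∑ i, Complex.normSq (v k i)) * (∑ i, Complex.normSq (w k i)) := by
    have := E1.symm.trans E2
    exact_mod_cast this
  have hAB : ∀ k, Complex.normSq (∑ i, v k i * w k i)
      = (∑ i, Complex.normSq (v k i)) * (∑ i, Complex.normSq (w k i)) := fun k =>
    (Finset.sum_eq_sum_iff_of_le (fun k _ => cs_ineq (v k) (w k))).1 hR k (mem_univ k)
  choose u hu0 hu using fun k => key_cs (v k) (w k) (hAB k)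
  exact ⟨m, u, hu0, fun i j => by
    rw [h1 i j]; exact Finset.sum_congr rfl fun k _ => hu k i j⟩

end Main

theorem pcp_self_implies_cp {n : ℕ} (X : Matrix (Fin n) (Fin n) ℂ) (h : IsPCP X X) :
    ∃ (m : ℕ) (u : Fin m → Fin n → ℝ), (∀ k i, 0 ≤ u k i) ∧
      ∀ i j, X i j = ∑ k, (u k i : ℂ) * (u k j : ℂ) :=
  pcp_self_implies_cp' X h

end
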